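/- Every compact almost paratopological semitopological group is a topological group; that is, if G is a semitopological group whose topology is compact and G is almost paratopological, then multiplication G × G → G is jointly continuous and inversion x ↦ x⁻¹ is continuous. -/

import Mathlib

open Pointwise Filter Set Topology

set_option maxHeartbeats 1000000

/-- A semitopological group `G` is almost paratopological if for every `g` with
`1 ∉ closure {g}` there is a neighborhood `U` of `1` with `g ∉ U * U`. -/
def IsAlmostParatopological (G : Type*) [Group G] [TopologicalSpace G] : Prop :=
  ∀ g : G, (1 : G) ∉ closure ({g} : Set G) → ∃ U ∈ nhds (1 : G), g ∉ U * U

namespace CompactSemitopGrp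

variable {G : Type*} [Group G] [TopologicalSpace G]

/-- The intersection of all neighborhoods of `1`. -/
def NN (G : Type*) [Group G] [TopologicalSpace G] : Set G :=
  {x | ∀ U ∈ nhds (1 : G), x ∈ U}

section Basic

variable (hl : ∀ g : G, Continuous fun x : G => g * x)
variable (hr : ∀ g : G, Continuous fun x : G => x * g)

include hl in
/-- Left translation as a homeomorphism. -/
noncomputable def lhomeo (g : G) : G ≃ₜ G where
  toEquiv := Equiv.mulLeft g
  continuous_toFun := by simpa using hl g
  continuous_invFun := by simpa using hl g⁻¹

include hr in
/-- Right translation as a homeomorphism. -/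
noncomputable def rhomeo (g : G) : G ≃ₜ G where
  toEquiv := Equiv.mulRight g
  continuous_toFun := by simpa using hr g
  continuous_invFun := by simpa using hr g⁻¹

include hl in
lemma map_nhds_left (g x : G) :
    Filter.map (fun y => g * y) (𝓝 x) = 𝓝 (g * x) := by
  exact (lhomeo hl g).map_nhds_eq x

include hr in
lemma map_nhds_right (g x : G) :
    Filter.map (fun y => y * g) (𝓝 x) = 𝓝 (x * g) := by
  exact (rhomeo hr g).map_nhds_eq x

include hl in
lemma isOpen_limg {U : Set G} (g : G) (hU : IsOpen U) :
    IsOpen ((fun y => g * y) '' U) := by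
  exact ((lhomeo hl g).isOpen_image (s := U)).mpr hU

include hr in
lemma isOpen_rimg {U : Set G} (g : G) (hU : IsOpen U) :
    IsOpen ((fun y => y * g) '' U) := by
  exact ((rhomeo hr g).isOpen_image (s := U)).mpr hU

lemma one_mem_closure_singleton_iff {g : G} :
    (1 : G) ∈ closure ({g} : Set G) ↔ g ∈ NN G := by
  rw [mem_closure_iff_nhds]
  constructor
  · intro h U hU
    rcases h U hU with ⟨y, hy, hy'⟩
    rcases hy' with rfl
    exact hy
  · intro h t ht
    exact ⟨g, h t ht, rfl⟩

lemma exclusion (hG : IsAlmostParatopological G) {g : G} (h : g ∉ NN G) :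
    ∃ U ∈ nhds (1 : G), g ∉ U * U := by
  apply hG
  rw [one_mem_closure_singleton_iff]
  exact h

lemma one_mem_NN : (1 : G) ∈ NN G := fun U hU => mem_of_mem_nhds hU

lemma NN_mul (hG : IsAlmostParatopological G) {a b : G}
    (ha : a ∈ NN G) (hb : b ∈ NN G) : a * b ∈ NN G := by
  by_contra h
  obtain ⟨U, hU, h2⟩ := exclusion hG h
  exact h2 (Set.mul_mem_mul (ha U hU) (hb U hU))

lemma NN_pow (hG : IsAlmostParatopological G) {a : G} (ha : a ∈ NN G) :
    ∀ n : ℕ, a ^ n ∈ NN G := by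
  intro n
  induction n with
  | zero => simpa using one_mem_NN (G := G)
  | succ k ih => rw [pow_succ]; exact NN_mul hG ih ha

end Basic

section Recurrence

variable [CompactSpace G]
variable (hl : ∀ g : G, Continuous fun x : G => g * x)
variable (hr : ∀ g : G, Continuous fun x : G => x * g)

include hl hr in
/-- Recurrence: in a compact semitopological group every element returns
to every neighborhood of the identity. -/
lemma recurrence (z : G) {V : Set G} (hV : V ∈ 𝓝 (1 : G)) :
    ∃ n : ℕ, z ^ (n + 1) ∈ V := by
  classical
  set S : Set (Set G) := {C | C.Nonempty ∧ IsClosed C ∧ ∀ x ∈ C, z * x ∈ C} with hS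
  have hUS : Set.univ ∈ S := ⟨⟨1, trivial⟩, isClosed_univ, fun x _ => trivial⟩
  have hchain : ∀ c ⊆ S, IsChain (· ⊆ ·) c → c.Nonempty →
      ∃ lb ∈ S, ∀ s ∈ c, lb ⊆ s := by
    intro c hcS hchain hcne
    refine ⟨⋂₀ c, ⟨?_, ?_, ?_⟩, fun s hs => sInter_subset_of_mem hs⟩
    · -- nonempty
      have : Nonempty c := hcne.to_subtype
      have h := IsCompact.nonempty_iInter_of_directed_nonempty_isCompact_isClosed
        (fun i : c => (i : Set G))
        (by
          intro i j
          rcases hchain.total i.2 j.2 with h | h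
          · exact ⟨i, le_refl _, h⟩
          · exact ⟨j, h, le_refl _⟩)
        (fun i => (hcS i.2).1)
        (fun i => (hcS i.2).2.1.isCompact)
        (fun i => (hcS i.2).2.1)
      rwa [sInter_eq_iInter]
    · exact isClosed_sInter fun s hs => (hcS hs).2.1
    · intro x hx s hs
      exact (hcS hs).2.2 x (hx s hs)
  obtain ⟨M, -, hMS, hMmin⟩ := zorn_superset_nonempty S hchain Set.univ hUS
  obtain ⟨c, hc⟩ := hMS.1
  have hMinv : ∀ x ∈ M, z * x ∈ M := hMS.2.2
  set R : Set G := Set.range (fun n : ℕ => z ^ (n + 1) * c) with hR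
  have hRM : R ⊆ M := by
    rintro - ⟨n, rfl⟩
    induction n with
    | zero => simpa using hMinv c hc
    | succ k ih =>
        have h := hMinv _ ih
        show z ^ (k + 1 + 1) * c ∈ M
        rw [pow_succ', mul_assoc]
        exact h
  have hDS : closure R ∈ S := by
    refine ⟨⟨z ^ 1 * c, subset_closure ⟨0, by simp⟩⟩, isClosed_closure, ?_⟩
    intro x hx
    have h1 : z * x ∈ (fun y => z * y) '' closure R := ⟨x, hx, rfl⟩
    have h2 : (fun y => z * y) '' closure R ⊆ closure ((fun y => z * y) '' R) :=
      ((lhomeo hl z).image_closure R).le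
    have h3 : (fun y => z * y) '' R ⊆ R := by
      rintro - ⟨-, ⟨n, rfl⟩, rfl⟩
      exact ⟨n + 1, by show z ^ (n + 1 + 1) * c = z * (z ^ (n + 1) * c); rw [pow_succ', mul_assoc]⟩
    exact closure_mono h3 (h2 h1)
  have hDM : closure R ⊆ M := closure_minimal hRM hMS.2.1
  have hMD : M = closure R := le_antisymm (hMmin hDS hDM) hDM
  have hcR : c ∈ closure R := by rw [← hMD]; exact hc
  obtain ⟨V', hV'V, hV'o, hV'1⟩ := mem_nhds_iff.mp hV
  have hO : IsOpen ((fun y => y * c) '' V') := isOpen_rimg hr c hV'o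
  have hcO : c ∈ (fun y => y * c) '' V' := ⟨1, hV'1, one_mul c⟩
  obtain ⟨y, hy1, hy2⟩ := (mem_closure_iff.mp hcR) _ hO hcO
  obtain ⟨v, hv, hvc⟩ := hy1
  obtain ⟨n, hn⟩ := hy2
  refine ⟨n, hV'V ?_⟩
  have h5 : z ^ (n + 1) * c = v * c := by
    have : z ^ (n + 1) * c = y := hn
    rw [this, ← hvc]
  have h6 := mul_right_cancel h5
  rwa [h6]

end Recurrence

section NNGroup

variable [CompactSpace G]
variable (hl : ∀ g : G, Continuous fun x : G => g * x)
variable (hr : ∀ g : G, Continuous fun x : G => x * g)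
variable (hG : IsAlmostParatopological G)

include hl hr hG in
lemma NN_inv {z : G} (hz : z ∈ NN G) : z⁻¹ ∈ NN G := by
  by_contra h
  obtain ⟨U, hU, hU2⟩ := exclusion hG h
  obtain ⟨n, hn⟩ := recurrence hl hr (z⁻¹) hU
  apply hU2
  have h1 : z⁻¹ = (z⁻¹) ^ (n + 1) * z ^ n := by group
  rw [h1]
  exact Set.mul_mem_mul hn (NN_pow hG hz n U hU)

include hG in
lemma mem_NN_of_forall_sq {x : G} (h : ∀ U ∈ 𝓝 (1 : G), x ∈ U * U) :
    x ∈ NN G := by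
  by_contra hx
  obtain ⟨U, hU, h2⟩ := exclusion hG hx
  exact h2 (h U hU)

include hl hr hG in
lemma closure_one_eq : closure ({(1 : G)} : Set G) = NN G := by
  ext x
  constructor
  · intro hx
    have hx' : x⁻¹ ∈ NN G := by
      intro U hU
      have himg : (fun y => x * y) '' U ∈ 𝓝 x := by
        have := Filter.image_mem_map (f := 𝓝 (1 : G)) (m := fun y => x * y) hU
        rwa [map_nhds_left hl x 1, mul_one] at this
      have h1 : ((fun y => x * y) '' U ∩ {1}).Nonempty :=
        mem_closure_iff_nhds.mp hx _ himg
      obtain ⟨y, ⟨u, hu, hxu⟩, hy1⟩ := h1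
      rcases hy1 with rfl
      have hux : u = x⁻¹ := eq_inv_of_mul_eq_one_right hxu
      rwa [← hux]
    have := NN_inv hl hr hG hx'
    simpa using this
  · intro hx
    rw [mem_closure_iff_nhds]
    intro t ht
    refine ⟨1, ?_, rfl⟩
    have hxinv : x⁻¹ ∈ NN G := NN_inv hl hr hG hx
    have hpre : (fun y => x * y) ⁻¹' t ∈ 𝓝 (1 : G) := by
      have : t ∈ Filter.map (fun y => x * y) (𝓝 (1 : G)) := by
        rw [map_nhds_left hl x 1, mul_one]; exact ht
      exact this
    have := hxinv _ hpre
    simpa using this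

include hl hr hG in
lemma NN_isClosed : IsClosed (NN G) := by
  rw [← closure_one_eq hl hr hG]; exact isClosed_closure

include hl hr hG in
lemma inv_nhds_one {W : Set G} (hW : W ∈ 𝓝 (1 : G)) :
    ∃ V ∈ 𝓝 (1 : G), ∀ v ∈ V, v⁻¹ ∈ W := by
  classical
  obtain ⟨W₀, hW₀sub, hW₀o, hW₀1⟩ := mem_nhds_iff.mp hW
  by_contra hcon
  push_neg at hcon
  set ι := {V : Set G // V ∈ 𝓝 (1 : G)} with hι
  have hne : ∀ V : ι, ((fun z : G => z⁻¹) '' V.1 ∩ W₀ᶜ).Nonempty := by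
    intro V
    obtain ⟨v, hv, hv'⟩ := hcon V.1 V.2
    exact ⟨v⁻¹, ⟨v, hv, rfl⟩, fun hmem => hv' (hW₀sub hmem)⟩
  set K : ι → Set G := fun V => closure ((fun z : G => z⁻¹) '' V.1 ∩ W₀ᶜ) with hK
  have hdir : Directed (· ⊇ ·) K := by
    intro V V'
    refine ⟨⟨V.1 ∩ V'.1, Filter.inter_mem V.2 V'.2⟩, ?_, ?_⟩ <;>
      · apply closure_mono
        intro y hy
        exact ⟨by
          obtain ⟨z, hz, rfl⟩ := hy.1
          exact ⟨z, by simp_all [Set.mem_inter_iff], rfl⟩, hy.2⟩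
  have : Nonempty ι := ⟨⟨Set.univ, Filter.univ_mem⟩⟩
  obtain ⟨q, hq⟩ := IsCompact.nonempty_iInter_of_directed_nonempty_isCompact_isClosed
    K hdir (fun V => (hne V).closure)
    (fun V => isClosed_closure.isCompact) (fun V => isClosed_closure)
  have hqmem : ∀ V : ι, q ∈ K V := by
    intro V
    exact Set.mem_iInter.mp hq V
  have hqW : q ∉ W₀ := by
    have h1 : q ∈ K ⟨Set.univ, Filter.univ_mem⟩ := hqmem _
    have h2 : K ⟨Set.univ, Filter.univ_mem⟩ ⊆ W₀ᶜ := by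
      have : (fun z : G => z⁻¹) '' Set.univ ∩ W₀ᶜ ⊆ W₀ᶜ := Set.inter_subset_right
      calc closure ((fun z : G => z⁻¹) '' Set.univ ∩ W₀ᶜ) ⊆ closure W₀ᶜ := closure_mono this
        _ = W₀ᶜ := (hW₀o.isClosed_compl).closure_eq
    exact h2 h1
  have hqinv : q⁻¹ ∈ NN G := by
    apply mem_NN_of_forall_sq hG
    intro U hU
    obtain ⟨U', hU'su, hU'o, hU'1⟩ := mem_nhds_iff.mp hU
    have hU'n : U' ∈ 𝓝 (1 : G) := hU'o.mem_nhds hU'1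
    have hqK : q ∈ K ⟨U', hU'n⟩ := hqmem _
    have hO : IsOpen ((fun y => q * y) '' U') := isOpen_limg hl q hU'o
    have hqO : q ∈ (fun y => q * y) '' U' := ⟨1, hU'1, mul_one q⟩
    obtain ⟨b, hb1, hb2⟩ := (mem_closure_iff.mp hqK) _ hO hqO
    obtain ⟨u', hu', hqu'⟩ := hb1
    obtain ⟨⟨zz, hz, hzb⟩, -⟩ := hb2
    have hqeq : q⁻¹ = u' * zz := by
      have hb' : q * u' = b := hqu'
      have hzb' : zz⁻¹ = b := hzb
      have h1 : q * u' = zz⁻¹ := by rw [hb', hzb']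
      have : q = zz⁻¹ * u'⁻¹ := by
        rw [← h1]; group
      rw [this]; group
    rw [hqeq]
    exact Set.mul_mem_mul (hU'su hu') (hU'su hz)
  have hqNN : q ∈ NN G := by
    have := NN_inv hl hr hG hqinv
    simpa using this
  exact hqW (hqNN W₀ (hW₀o.mem_nhds hW₀1))

include hl hr hG in
lemma tendsto_inv_one : Filter.Tendsto (fun x : G => x⁻¹) (𝓝 1) (𝓝 1) := by
  rw [Filter.tendsto_def]
  intro W hW
  obtain ⟨V, hV, hVW⟩ := inv_nhds_one hl hr hG hW
  exact Filter.mem_of_superset hV fun v hv => hVW v hv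

include hl hr hG in
lemma continuous_inv' : Continuous (fun x : G => x⁻¹) := by
  rw [continuous_iff_continuousAt]
  intro a
  unfold ContinuousAt
  have h1 : 𝓝 a = Filter.map (fun y => a * y) (𝓝 (1 : G)) := by
    rw [map_nhds_left hl a 1, mul_one]
  rw [h1, Filter.tendsto_map'_iff]
  have h2 : ((fun x : G => x⁻¹) ∘ fun y => a * y) =
      (fun z => z * a⁻¹) ∘ (fun x : G => x⁻¹) := by
    funext y; exact mul_inv_rev a y
  rw [h2]
  apply Filter.Tendsto.comp
  · have := (hr a⁻¹).tendsto (1 : G)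
    simpa using this
  · exact tendsto_inv_one hl hr hG

end NNGroup

end CompactSemitopGrp

namespace CompactSemitopGrp

variable {G : Type*} [Group G] [TopologicalSpace G]

section Regularity

variable [CompactSpace G]
variable (hl : ∀ g : G, Continuous fun x : G => g * x)
variable (hr : ∀ g : G, Continuous fun x : G => x * g)
variable (hG : IsAlmostParatopological G)

include hl hr hG in
lemma inv_mem_nhds_one {V : Set G} (hV : V ∈ 𝓝 (1 : G)) : V⁻¹ ∈ 𝓝 (1 : G) := by
  have h := tendsto_inv_one hl hr hG
  rw [Filter.tendsto_def] at h
  have h2 := h V hV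
  have h3 : (fun x : G => x⁻¹) ⁻¹' V = V⁻¹ := by
    ext x
    simp [Set.mem_inv]
  rwa [h3] at h2

include hl hr hG in
lemma closure_subset_mul {A S : Set G} (hS : S ∈ 𝓝 (1 : G)) :
    closure A ⊆ A * S := by
  intro x hx
  have hSinv : S⁻¹ ∈ 𝓝 (1 : G) := inv_mem_nhds_one hl hr hG hS
  obtain ⟨T, hTs, hTo, hT1⟩ := mem_nhds_iff.mp hSinv
  have himg : (fun y => x * y) '' T ∈ 𝓝 x := by
    have := Filter.image_mem_map (f := 𝓝 (1 : G)) (m := fun y => x * y)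
      (hTo.mem_nhds hT1)
    rwa [map_nhds_left hl x 1, mul_one] at this
  obtain ⟨y, hyi, hyA⟩ := mem_closure_iff_nhds.mp hx _ himg
  obtain ⟨t, ht, hty⟩ := hyi
  have hty' : x * t = y := hty
  have htS : t⁻¹ ∈ S := Set.mem_inv.mp (hTs ht)
  refine ⟨y, hyA, t⁻¹, htS, ?_⟩
  rw [← hty']
  group

include hl hr hG in
lemma regularity_one {O : Set G} (hO : IsOpen O) (h1 : (1 : G) ∈ O) :
    ∃ S : Set G, IsOpen S ∧ (1 : G) ∈ S ∧ closure S ⊆ O := by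
  classical
  by_contra hcon
  push_neg at hcon
  set ι := {S : Set G // IsOpen S ∧ (1 : G) ∈ S} with hι
  set K : ι → Set G := fun S => closure S.1 ∩ Oᶜ with hK
  have hne : ∀ S : ι, (K S).Nonempty := by
    intro S
    rcases Set.not_subset.mp (hcon S.1 S.2.1 S.2.2) with ⟨x, hx1, hx2⟩
    exact ⟨x, hx1, hx2⟩
  have hdir : Directed (· ⊇ ·) K := by
    intro S S'
    refine ⟨⟨S.1 ∩ S'.1, S.2.1.inter S'.2.1, ⟨S.2.2, S'.2.2⟩⟩, ?_, ?_⟩ <;>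
      exact Set.inter_subset_inter
        (closure_mono (by intro x hx; first | exact hx.1 | exact hx.2)) subset_rfl
  have : Nonempty ι := ⟨⟨Set.univ, isOpen_univ, trivial⟩⟩
  obtain ⟨q, hq⟩ := IsCompact.nonempty_iInter_of_directed_nonempty_isCompact_isClosed
    K hdir hne
    (fun S => ((isClosed_closure).inter (hO.isClosed_compl)).isCompact)
    (fun S => (isClosed_closure).inter (hO.isClosed_compl))
  have hqmem : ∀ S : ι, q ∈ K S := fun S => Set.mem_iInter.mp hq S
  have hqNN : q ∈ NN G := by
    apply mem_NN_of_forall_sq hG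
    intro U hU
    obtain ⟨U', hU'su, hU'o, hU'1⟩ := mem_nhds_iff.mp hU
    have h1 : q ∈ closure U' := (hqmem ⟨U', hU'o, hU'1⟩).1
    have h2 : closure U' ⊆ U' * U := closure_subset_mul hl hr hG hU
    exact Set.mul_subset_mul_right hU'su (h2 h1)
  have : q ∈ O := hqNN O (hO.mem_nhds h1)
  exact (hqmem ⟨Set.univ, isOpen_univ, trivial⟩).2 this

include hl hr hG in
lemma regularity_at {x : G} {O : Set G} (hO : IsOpen O) (hx : x ∈ O) :
    ∃ V : Set G, IsOpen V ∧ x ∈ V ∧ closure V ⊆ O := by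
  set O' : Set G := (fun y => x⁻¹ * y) '' O with hO'
  have hO'o : IsOpen O' := isOpen_limg hl x⁻¹ hO
  have h1O' : (1 : G) ∈ O' := ⟨x, hx, inv_mul_cancel x⟩
  obtain ⟨S, hSo, hS1, hScl⟩ := regularity_one hl hr hG hO'o h1O'
  refine ⟨(fun y => x * y) '' S, isOpen_limg hl x hSo, ⟨1, hS1, mul_one x⟩, ?_⟩
  have hcl : closure ((fun y => x * y) '' S) = (fun y => x * y) '' closure S :=
    ((lhomeo hl x).image_closure S).symm
  rw [hcl]
  rintro - ⟨y, hy, rfl⟩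
  have h4 := hScl hy
  obtain ⟨z, hz, hzy⟩ := h4
  have hzy' : x⁻¹ * z = y := hzy
  show x * y ∈ O
  rw [← hzy']
  have hxz : x * (x⁻¹ * z) = z := by group
  rw [hxz]
  exact hz

include hl hr hG in
lemma normalSpace : NormalSpace G := by
  constructor
  intro s t hs ht hdisj
  classical
  have hstep : ∀ a ∈ s, ∃ V : Set G, IsOpen V ∧ a ∈ V ∧ closure V ⊆ tᶜ := by
    intro a ha
    exact regularity_at hl hr hG ht.isOpen_compl (Set.disjoint_left.mp hdisj ha)
  choose! V hVo hVa hVc using hstep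
  have hcover : s ⊆ ⋃ a ∈ s, V a := fun a ha => Set.mem_biUnion ha (hVa a ha)
  obtain ⟨F, hFs, hFfin, hFcover⟩ :=
    hs.isCompact.elim_finite_subcover_image (fun a ha => hVo a ha) hcover
  refine ⟨⋃ a ∈ F, V a, (⋃ a ∈ F, closure (V a))ᶜ, ?_, ?_, hFcover, ?_, ?_⟩
  · exact isOpen_biUnion fun a ha => hVo a (hFs ha)
  · exact (hFfin.isClosed_biUnion fun a _ => isClosed_closure).isOpen_compl
  · intro x hx
    simp only [Set.mem_compl_iff, Set.mem_iUnion]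
    rintro ⟨a, ha, hxa⟩
    exact (hVc a (hFs ha) hxa) hx
  · rw [Set.disjoint_left]
    intro x hx hx2
    simp only [Set.mem_iUnion] at hx
    obtain ⟨a, ha, hxa⟩ := hx
    exact hx2 (Set.mem_biUnion ha (subset_closure hxa))

include hl hr hG in
lemma urysohn {W : Set G} (hW : W ∈ 𝓝 (1 : G)) :
    ∃ F : G → ℝ, Continuous F ∧ (∀ x, F x ∈ Set.Icc (0 : ℝ) 1) ∧
      F 1 = 0 ∧ ∀ x, x ∉ W → F x = 1 := by
  have hnorm : NormalSpace G := normalSpace hl hr hG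
  obtain ⟨W₀, hW₀su, hW₀o, hW₀1⟩ := mem_nhds_iff.mp hW
  have hA : IsClosed (closure ({(1 : G)} : Set G)) := isClosed_closure
  have hB : IsClosed (W₀ᶜ) := hW₀o.isClosed_compl
  have hAB : Disjoint (closure ({(1 : G)} : Set G)) (W₀ᶜ) := by
    rw [Set.disjoint_left]
    intro x hx hx2
    rw [closure_one_eq hl hr hG] at hx
    exact hx2 (hx W₀ (hW₀o.mem_nhds hW₀1))
  obtain ⟨F, hF0, hF1, hF01⟩ := exists_continuous_zero_one_of_isClosed hA hB hAB
  refine ⟨F, F.continuous, hF01, ?_, ?_⟩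
  · have : (1 : G) ∈ closure ({(1 : G)} : Set G) := subset_closure rfl
    simpa using hF0 this
  · intro x hx
    have : x ∈ W₀ᶜ := fun hmem => hx (hW₀su hmem)
    simpa using hF1 this

end Regularity

end CompactSemitopGrp

namespace CompactSemitopGrp

variable {G : Type*} [Group G] [TopologicalSpace G]

/-- General cluster point lemma for sequences in a compact space. -/
lemma cluster_of_seq {X : Type*} [TopologicalSpace X] [CompactSpace X] (s : ℕ → X) :
    ∃ x : X, ∀ k : ℕ, x ∈ closure (s '' Set.Ici k) := by
  obtain ⟨x, hx⟩ := exists_clusterPt_of_compactSpace (Filter.map s Filter.atTop)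
  refine ⟨x, fun k => ?_⟩
  rw [mem_closure_iff_clusterPt]
  apply hx.mono
  rw [Filter.le_principal_iff, Filter.mem_map]
  exact Filter.mem_of_superset (Filter.Ici_mem_atTop k)
    (fun l hl => ⟨l, hl, rfl⟩)

section Core

variable [CompactSpace G]

/-- Data of a splitting step in the tree construction. -/
structure Step (F : G → ℝ) (ε : ℝ) (W : Set G) where
  t : G
  W0 : Set G
  W1 : Set G
  open0 : IsOpen W0
  open1 : IsOpen W1
  ne0 : W0.Nonempty
  ne1 : W1.Nonempty
  sub0 : W0 ⊆ W
  sub1 : W1 ⊆ W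
  sep : ∀ x ∈ closure W0, ∀ y ∈ closure W1, 8 * ε ≤ |F (x * t) - F (y * t)|

lemma step_nonempty (hr : ∀ g : G, Continuous fun x : G => x * g)
    {F : G → ℝ} (hF : Continuous F) {ε : ℝ} (hε : 0 < ε)
    (den : ∀ U : Set G, IsOpen U → U.Nonempty →
      ∃ v ∈ U, ∃ v' ∈ U, ∃ t : G, 10 * ε < |F (v * t) - F (v' * t)|)
    (W : Set G) (hWo : IsOpen W) (hWne : W.Nonempty) :
    Nonempty (Step F ε W) := by
  obtain ⟨u, hu, u', hu', t, ht⟩ := den W hWo hWne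
  have hcont : ∀ c : G, Continuous fun x : G => |F (x * t) - F (c * t)| := fun c =>
    ((hF.comp (hr t)).sub continuous_const).abs
  have hclos : ∀ c : G,
      closure (W ∩ {x | |F (x * t) - F (c * t)| < ε}) ⊆
        {x | |F (x * t) - F (c * t)| ≤ ε} := by
    intro c
    exact closure_minimal (fun x hx => (le_of_lt hx.2 : |F (x * t) - F (c * t)| ≤ ε))
      (isClosed_le (hcont c) continuous_const)
  refine ⟨⟨t, W ∩ {x | |F (x * t) - F (u * t)| < ε},
    W ∩ {x | |F (x * t) - F (u' * t)| < ε},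
    hWo.inter (isOpen_lt (hcont u) continuous_const),
    hWo.inter (isOpen_lt (hcont u') continuous_const),
    ⟨u, hu, by simpa using hε⟩, ⟨u', hu', by simpa using hε⟩,
    Set.inter_subset_left, Set.inter_subset_left, ?_⟩⟩
  intro x hx y hy
  have h1 : |F (x * t) - F (u * t)| ≤ ε := hclos u hx
  have h2 : |F (y * t) - F (u' * t)| ≤ ε := hclos u' hy
  have t1 : |F (u * t) - F (u' * t)| ≤ |F (u * t) - F (x * t)| + |F (x * t) - F (u' * t)| :=
    abs_sub_le _ _ _
  have t2 : |F (x * t) - F (u' * t)| ≤ |F (x * t) - F (y * t)| + |F (y * t) - F (u' * t)| :=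
    abs_sub_le _ _ _
  have t3 : |F (u * t) - F (x * t)| = |F (x * t) - F (u * t)| := abs_sub_comm _ _
  linarith

variable (hr : ∀ g : G, Continuous fun x : G => x * g)
    {F : G → ℝ} (hF : Continuous F) {ε : ℝ} (hε : 0 < ε)
    (den : ∀ U : Set G, IsOpen U → U.Nonempty →
      ∃ v ∈ U, ∃ v' ∈ U, ∃ t : G, 10 * ε < |F (v * t) - F (v' * t)|)

/-- Chosen step data for a nonempty open set. -/
noncomputable def stepOf (W : {W : Set G // IsOpen W ∧ W.Nonempty}) : Step F ε W.1 :=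
  Classical.choice (step_nonempty hr hF hε den W.1 W.2.1 W.2.2)

/-- The tree of nonempty open sets. -/
noncomputable def node : List Bool → {W : Set G // IsOpen W ∧ W.Nonempty}
  | [] => ⟨Set.univ, isOpen_univ, ⟨1, trivial⟩⟩
  | (b :: σ) =>
      match b with
      | false => ⟨(stepOf hr hF hε den (node σ)).W0,
          (stepOf hr hF hε den (node σ)).open0, (stepOf hr hF hε den (node σ)).ne0⟩
      | true => ⟨(stepOf hr hF hε den (node σ)).W1,
          (stepOf hr hF hε den (node σ)).open1, (stepOf hr hF hε den (node σ)).ne1⟩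

lemma node_cons_subset (b : Bool) (σ : List Bool) :
    (node hr hF hε den (b :: σ)).1 ⊆ (node hr hF hε den σ).1 := by
  cases b
  · exact (stepOf hr hF hε den (node hr hF hε den σ)).sub0
  · exact (stepOf hr hF hε den (node hr hF hε den σ)).sub1

/-- The path of a branch. -/
def path (β : ℕ → Bool) : ℕ → List Bool
  | 0 => []
  | (k + 1) => β k :: path β k

lemma node_path_mono (β : ℕ → Bool) : ∀ {k l : ℕ}, k ≤ l →
    (node hr hF hε den (path β l)).1 ⊆ (node hr hF hε den (path β k)).1 := by
  intro k l hkl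
  induction l with
  | zero =>
      have : k = 0 := Nat.le_zero.mp hkl
      subst this; exact subset_rfl
  | succ n ih =>
      rcases Nat.lt_or_ge k (n + 1) with h | h
      · have h1 : (node hr hF hε den (path β (n + 1))).1 ⊆ (node hr hF hε den (path β n)).1 :=
          node_cons_subset hr hF hε den _ _
        exact (h1.trans (ih (Nat.lt_succ_iff.mp h)))
      · have : k = n + 1 := le_antisymm hkl h
        subst this; exact subset_rfl

/-- A witness point of each tree node. -/
noncomputable def wit (σ : List Bool) : G := (node hr hF hε den σ).2.2.some

lemma wit_mem (σ : List Bool) : wit hr hF hε den σ ∈ (node hr hF hε den σ).1 :=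
  (node hr hF hε den σ).2.2.some_mem

lemma exists_branch_cluster (β : ℕ → Bool) :
    ∃ x : G, (∀ k, x ∈ closure ((node hr hF hε den (path β k)).1)) ∧
      x ∈ closure (Set.range fun k => wit hr hF hε den (path β k)) := by
  obtain ⟨x, hx⟩ := cluster_of_seq (fun k => wit hr hF hε den (path β k))
  refine ⟨x, fun k => ?_, ?_⟩
  · refine (closure_mono ?_) (hx k)
    rintro - ⟨l, hl, rfl⟩
    exact node_path_mono hr hF hε den β hl (wit_mem hr hF hε den _)
  · refine (closure_mono ?_) (hx 0)
    rintro - ⟨l, -, rfl⟩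
    exact ⟨l, rfl⟩

end Core

end CompactSemitopGrp

namespace CompactSemitopGrp

variable {G : Type*} [Group G] [TopologicalSpace G]

lemma list_map_eq_of {α β : Type*} {l : List α} {f g : α → β}
    (h : l.map f = l.map g) : ∀ a ∈ l, f a = g a := by
  induction l with
  | nil => intro a ha; cases ha
  | cons x xs ih =>
      simp only [List.map_cons, List.cons.injEq] at h
      intro a ha
      rcases List.mem_cons.mp ha with rfl | ha
      · exact h.1
      · exact ih h.2 a ha

lemma abs_lt_of_floor_div_eq {a b ε : ℝ} (hε : 0 < ε) (ha : 0 ≤ a) (hb : 0 ≤ b)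
    (h : ⌊a / ε⌋₊ = ⌊b / ε⌋₊) : |a - b| < ε := by
  have hεne : ε ≠ 0 := ne_of_gt hε
  have h1 : (⌊a / ε⌋₊ : ℝ) ≤ a / ε := Nat.floor_le (by positivity)
  have h2 : a / ε < ⌊a / ε⌋₊ + 1 := Nat.lt_floor_add_one _
  have h3 : (⌊b / ε⌋₊ : ℝ) ≤ b / ε := Nat.floor_le (by positivity)
  have h4 : b / ε < ⌊b / ε⌋₊ + 1 := Nat.lt_floor_add_one _
  rw [h] at h1 h2
  have hd : |a / ε - b / ε| < 1 := by
    rw [abs_sub_lt_iff]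
    constructor <;> linarith
  have hea : a = a / ε * ε := (div_mul_cancel₀ a hεne).symm
  have heb : b = b / ε * ε := (div_mul_cancel₀ b hεne).symm
  calc |a - b| = |(a / ε - b / ε) * ε| := by rw [sub_mul, ← hea, ← heb]
    _ = |a / ε - b / ε| * ε := by rw [abs_mul, abs_of_pos hε]
    _ < ε := by nlinarith

section CoreMain

variable [CompactSpace G]

lemma core (hl : ∀ g : G, Continuous fun x : G => g * x)
    (hr : ∀ g : G, Continuous fun x : G => x * g)
    {F : G → ℝ} (hF : Continuous F) (hF0 : ∀ x, 0 ≤ F x)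
    {ε : ℝ} (hε : 0 < ε) :
    ∃ U : Set G, IsOpen U ∧ U.Nonempty ∧
      ∀ v ∈ U, ∀ v' ∈ U, ∀ t : G, |F (v * t) - F (v' * t)| ≤ 10 * ε := by
  classical
  by_contra hcon
  push_neg at hcon
  have den : ∀ U : Set G, IsOpen U → U.Nonempty →
      ∃ v ∈ U, ∃ v' ∈ U, ∃ t : G, 10 * ε < |F (v * t) - F (v' * t)| := by
    intro U hUo hUne
    obtain ⟨v, hv, v', hv', t, ht⟩ := hcon U hUo hUne
    exact ⟨v, hv, v', hv', t, ht⟩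
  obtain ⟨e, he⟩ := exists_surjective_nat (List Bool)
  set w : ℕ → G := fun j => wit hr hF hε den (e j) with hw
  -- uniform modulus for points in the closure of the witnesses
  have moduli : ∀ x : G, x ∈ closure (Set.range w) → ∃ m : ℕ, ∀ t t' : G,
      (∀ j, j < m + 1 → |F (w j * t) - F (w j * t')| ≤ 1 / ((m : ℝ) + 1)) →
      |F (x * t) - F (x * t')| ≤ ε := by
    intro x hx
    by_contra hmod
    push_neg at hmod
    choose tt tt' htt htt' using hmod
    obtain ⟨q, hq⟩ := cluster_of_seq (fun m => (tt m, tt' m))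
    have hagree : ∀ j : ℕ, F (w j * q.1) = F (w j * q.2) := by
      intro j
      have hle : ∀ M : ℕ, |F (w j * q.1) - F (w j * q.2)| ≤ 1 / ((M : ℝ) + 1) := by
        intro M
        have hcl : IsClosed {p : G × G | |F (w j * p.1) - F (w j * p.2)| ≤ 1 / ((M : ℝ) + 1)} := by
          apply isClosed_le _ continuous_const
          exact ((hF.comp ((hl (w j)).comp continuous_fst)).sub
            (hF.comp ((hl (w j)).comp continuous_snd))).abs
        have hsub : (fun m => (tt m, tt' m)) '' Set.Ici (max j M) ⊆
            {p : G × G | |F (w j * p.1) - F (w j * p.2)| ≤ 1 / ((M : ℝ) + 1)} := by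
          rintro - ⟨m, hm, rfl⟩
          have hjm : j < m + 1 := by
            have h := le_trans (le_max_left j M) hm
            omega
          have h1 := htt m j hjm
          have hMm : (M : ℝ) ≤ (m : ℝ) := by
            have : M ≤ m := le_trans (le_max_right j M) hm
            exact_mod_cast this
          have h2 : 1 / ((m : ℝ) + 1) ≤ 1 / ((M : ℝ) + 1) := by
            apply one_div_le_one_div_of_le
            · positivity
            · linarith
          exact le_trans h1 h2
        exact hcl.closure_subset (closure_mono hsub (hq (max j M)))
      have habs : |F (w j * q.1) - F (w j * q.2)| ≤ 0 := by
        by_contra hpos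
        push_neg at hpos
        obtain ⟨M, hM⟩ := exists_nat_one_div_lt hpos
        exact absurd (hle M) (not_le.mpr hM)
      have h0 : |F (w j * q.1) - F (w j * q.2)| = 0 :=
        le_antisymm habs (abs_nonneg _)
      have := abs_eq_zero.mp h0
      linarith [sub_eq_zero.mp this]
    have hZ : F (x * q.1) = F (x * q.2) := by
      have hZc : IsClosed {g : G | F (g * q.1) = F (g * q.2)} :=
        isClosed_eq (hF.comp (hr q.1)) (hF.comp (hr q.2))
      have hsub : Set.range w ⊆ {g : G | F (g * q.1) = F (g * q.2)} := by
        rintro - ⟨j, rfl⟩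
        exact hagree j
      exact hZc.closure_subset (closure_mono hsub hx)
    have hdirt : ε ≤ |F (x * q.1) - F (x * q.2)| := by
      have hcl : IsClosed {p : G × G | ε ≤ |F (x * p.1) - F (x * p.2)|} := by
        apply isClosed_le continuous_const
        exact ((hF.comp ((hl x).comp continuous_fst)).sub
          (hF.comp ((hl x).comp continuous_snd))).abs
      have hsub : (fun m => (tt m, tt' m)) '' Set.Ici 0 ⊆
          {p : G × G | ε ≤ |F (x * p.1) - F (x * p.2)|} := by
        rintro - ⟨m, -, rfl⟩
        exact le_of_lt (htt' m)
      exact hcl.closure_subset (closure_mono hsub (hq 0))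
    rw [hZ] at hdirt
    simp only [sub_self, abs_zero] at hdirt
    linarith
  -- finite nets
  have cover : ∀ m : ℕ, ∃ P : Finset G, ∀ t : G, ∃ r ∈ P,
      ∀ j, j < m + 1 → |F (w j * t) - F (w j * r)| ≤ 1 / ((m : ℝ) + 1) := by
    intro m
    set B : G → Set G := fun r =>
      ⋂ j ∈ Finset.range (m + 1), {t : G | |F (w j * t) - F (w j * r)| < 1 / ((m : ℝ) + 1)}
      with hB
    have hBo : ∀ r, IsOpen (B r) := by
      intro r
      apply isOpen_biInter_finset
      intro j hj
      exact isOpen_lt ((hF.comp (hl (w j))).sub continuous_const).abs continuous_const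
    have hBr : ∀ r, r ∈ B r := by
      intro r
      rw [hB]
      refine Set.mem_iInter₂.mpr fun j hj => ?_
      have : |F (w j * r) - F (w j * r)| = 0 := by simp
      rw [Set.mem_setOf_eq, this]
      positivity
    have hcov : (Set.univ : Set G) ⊆ ⋃ r : G, B r :=
      fun t _ => Set.mem_iUnion.mpr ⟨t, hBr t⟩
    obtain ⟨P, hP⟩ := isCompact_univ.elim_finite_subcover B hBo hcov
    refine ⟨P, fun t => ?_⟩
    obtain ⟨r, hrP, hrt⟩ := Set.mem_iUnion₂.mp (hP (Set.mem_univ t))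
    refine ⟨r, hrP, fun j hj => ?_⟩
    rw [hB] at hrt
    exact le_of_lt (Set.mem_iInter₂.mp hrt j (Finset.mem_range.mpr hj))
  -- branch cluster points
  choose xb hxb1 hxb2 using fun β : ℕ → Bool => exists_branch_cluster hr hF hε den β
  have hxbw : ∀ β : ℕ → Bool, xb β ∈ closure (Set.range w) := by
    intro β
    refine closure_mono ?_ (hxb2 β)
    rintro - ⟨k, rfl⟩
    obtain ⟨j, hj⟩ := he (path β k)
    exact ⟨j, by rw [hw]; simp only [hj]⟩
  choose mb hmb using fun β : ℕ → Bool => moduli (xb β) (hxbw β)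
  choose Pm hPm using cover
  -- the countable pattern
  set pat : (ℕ → Bool) → ℕ × List ℕ := fun β =>
    (mb β, ((Pm (mb β)).toList).map fun r => ⌊F (xb β * r) / ε⌋₊) with hpatdef
  have hnotinj : ¬ Function.Injective pat := by
    intro hinj
    have hcnt : Countable (ℕ → Bool) := hinj.countable
    obtain ⟨g, hg⟩ := exists_surjective_nat (ℕ → Bool)
    have hsurj : Function.Surjective (fun n => {k : ℕ | g n k = true}) := by
      intro S
      obtain ⟨n, hn⟩ := hg fun k => decide (k ∈ S)
      refine ⟨n, ?_⟩
      ext k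
      rw [Set.mem_setOf_eq, hn]
      simp
    exact Function.cantor_surjective _ hsurj
  rw [Function.not_injective_iff] at hnotinj
  obtain ⟨β, β', hpe, hne⟩ := hnotinj
  have hm1 : mb β = mb β' := congrArg Prod.fst hpe
  have hlists := congrArg Prod.snd hpe
  simp only [hpatdef] at hlists
  rw [← hm1] at hlists
  have hlist : ∀ r ∈ (Pm (mb β)).toList,
      ⌊F (xb β * r) / ε⌋₊ = ⌊F (xb β' * r) / ε⌋₊ :=
    list_map_eq_of hlists
  -- the two branch functions are uniformly 3ε-close
  have hmbβ' := hmb β'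
  rw [← hm1] at hmbβ'
  have hclose : ∀ t : G, |F (xb β * t) - F (xb β' * t)| ≤ 3 * ε := by
    intro t
    obtain ⟨r, hrP, hrt⟩ := hPm (mb β) t
    have h1 : |F (xb β * t) - F (xb β * r)| ≤ ε := hmb β t r hrt
    have h2 : |F (xb β' * t) - F (xb β' * r)| ≤ ε := hmbβ' t r hrt
    have h3 : |F (xb β * r) - F (xb β' * r)| < ε :=
      abs_lt_of_floor_div_eq hε (hF0 _) (hF0 _)
        (hlist r (Finset.mem_toList.mpr hrP))
    have t1 : |F (xb β * t) - F (xb β' * t)| ≤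
        |F (xb β * t) - F (xb β * r)| + |F (xb β * r) - F (xb β' * t)| := abs_sub_le _ _ _
    have t2 : |F (xb β * r) - F (xb β' * t)| ≤
        |F (xb β * r) - F (xb β' * r)| + |F (xb β' * r) - F (xb β' * t)| := abs_sub_le _ _ _
    have t3 : |F (xb β' * r) - F (xb β' * t)| = |F (xb β' * t) - F (xb β' * r)| :=
      abs_sub_comm _ _
    linarith
  -- find the splitting node
  have hnefun : ∃ k, β k ≠ β' k := by
    by_contra hoverall
    push_neg at hoverall
    exact hne (funext hoverall)
  set k₀ := Nat.find hnefun with hk₀def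
  have hk₀ : β k₀ ≠ β' k₀ := Nat.find_spec hnefun
  have hmin : ∀ j, j < k₀ → β j = β' j := fun j hj => not_not.mp (Nat.find_min hnefun hj)
  have hpatheq : path β k₀ = path β' k₀ := by
    have haux : ∀ k, k ≤ k₀ → path β k = path β' k := by
      intro k
      induction k with
      | zero => intro _; rfl
      | succ n ih =>
          intro hn
          show β n :: path β n = β' n :: path β' n
          rw [hmin n (by omega), ih (by omega)]
    exact haux k₀ le_rfl
  have hx1 : xb β ∈ closure ((node hr hF hε den (β k₀ :: path β k₀)).1) := hxb1 β (k₀ + 1)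
  have hx2 : xb β' ∈ closure ((node hr hF hε den (β' k₀ :: path β k₀)).1) := by
    have := hxb1 β' (k₀ + 1)
    rw [show path β' (k₀ + 1) = β' k₀ :: path β' k₀ from rfl, ← hpatheq] at this
    exact this
  set st := stepOf hr hF hε den (node hr hF hε den (path β k₀)) with hstdef
  have hsep : 8 * ε ≤ |F (xb β * st.t) - F (xb β' * st.t)| := by
    cases hb : β k₀ with
    | false =>
        have hb' : β' k₀ = true := by
          cases hb2 : β' k₀
          · rw [hb, hb2] at hk₀; exact absurd rfl hk₀
          · rfl
        rw [hb] at hx1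
        rw [hb'] at hx2
        have m1 : xb β ∈ closure st.W0 := hx1
        have m2 : xb β' ∈ closure st.W1 := hx2
        exact st.sep _ m1 _ m2
    | true =>
        have hb' : β' k₀ = false := by
          cases hb2 : β' k₀
          · rfl
          · rw [hb, hb2] at hk₀; exact absurd rfl hk₀
        rw [hb] at hx1
        rw [hb'] at hx2
        have m1 : xb β ∈ closure st.W1 := hx1
        have m2 : xb β' ∈ closure st.W0 := hx2
        have := st.sep _ m2 _ m1
        rwa [abs_sub_comm] at this
  have hfin := hclose st.t
  linarith

end CoreMain

end CompactSemitopGrp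

namespace CompactSemitopGrp

variable {G : Type*} [Group G] [TopologicalSpace G]

section Assembly

variable [CompactSpace G]
variable (hl : ∀ g : G, Continuous fun x : G => g * x)
variable (hr : ∀ g : G, Continuous fun x : G => x * g)
variable (hG : IsAlmostParatopological G)

include hl hr hG in
lemma mul_nhds_one {W : Set G} (hW : W ∈ 𝓝 (1 : G)) :
    ∃ V ∈ 𝓝 (1 : G), ∀ v ∈ V, ∀ w' ∈ V, v * w' ∈ W := by
  obtain ⟨F, hFc, hF01, hF1, hFW⟩ := urysohn hl hr hG hW
  have hF0 : ∀ x, 0 ≤ F x := fun x => (hF01 x).1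
  obtain ⟨U, hUo, hUne, hU⟩ := core hl hr hFc hF0 (ε := 1/30) (by norm_num)
  obtain ⟨u₀, hu₀⟩ := hUne
  set V : Set G := (fun y => y * u₀⁻¹) '' U with hV
  have hVnhds : V ∈ 𝓝 (1 : G) := by
    have hVo : IsOpen V := isOpen_rimg hr u₀⁻¹ hUo
    have h1V : (1 : G) ∈ V := ⟨u₀, hu₀, mul_inv_cancel u₀⟩
    exact hVo.mem_nhds h1V
  refine ⟨V, hVnhds, ?_⟩
  have key : ∀ v ∈ V, ∀ s : G, |F (v * s) - F s| ≤ 1 / 3 := by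
    rintro - ⟨v, hv, rfl⟩ s
    have h := hU v hv u₀ hu₀ (u₀⁻¹ * s)
    have harr1 : v * (u₀⁻¹ * s) = v * u₀⁻¹ * s := by group
    have harr2 : u₀ * (u₀⁻¹ * s) = s := by group
    rw [harr1, harr2] at h
    linarith
  intro v hv w' hw'
  by_contra hmem
  have hFvw : F (v * w') = 1 := hFW _ hmem
  have k1 := key v hv w'
  have k2 := key w' hw' 1
  rw [mul_one, hF1] at k2
  have a1 := abs_le.mp k1
  have a2 := abs_le.mp k2
  rw [hFvw] at a1
  have : F w' ≤ 1 / 3 + 0 := by linarith [a2.2]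
  linarith [a1.2]

include hl hr hG in
lemma continuous_mul' : Continuous (fun p : G × G => p.1 * p.2) := by
  have hmul1 : Filter.Tendsto (fun p : G × G => p.1 * p.2)
      ((𝓝 (1 : G)) ×ˢ (𝓝 (1 : G))) (𝓝 (1 : G)) := by
    rw [Filter.tendsto_def]
    intro W hW
    obtain ⟨V, hV, hVW⟩ := mul_nhds_one hl hr hG hW
    apply Filter.mem_of_superset (Filter.prod_mem_prod hV hV)
    rintro ⟨v, w'⟩ ⟨hv, hw'⟩
    exact hVW v hv w' hw'
  rw [continuous_iff_continuousAt]
  rintro ⟨a, b⟩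
  show Filter.Tendsto (fun p : G × G => p.1 * p.2) (𝓝 (a, b)) (𝓝 (a * b))
  have heq : (fun p : G × G => p.1 * p.2) =
      (fun z : G => a * z * b) ∘ (fun p : G × G => (a⁻¹ * p.1) * (p.2 * b⁻¹)) := by
    funext p
    simp only [Function.comp_apply]
    group
  rw [heq]
  have houter : Filter.Tendsto (fun z : G => a * z * b) (𝓝 (1 : G)) (𝓝 (a * b)) := by
    have h1 : Filter.Tendsto (fun z : G => a * z) (𝓝 (1 : G)) (𝓝 a) := by
      have := (hl a).tendsto (1 : G)
      simpa using this
    have h2 : Filter.Tendsto (fun z : G => z * b) (𝓝 a) (𝓝 (a * b)) := (hr b).tendsto a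
    have := h2.comp h1
    simpa [Function.comp_def] using this
  have hinner : Filter.Tendsto (fun p : G × G => (a⁻¹ * p.1) * (p.2 * b⁻¹))
      (𝓝 (a, b)) (𝓝 (1 : G)) := by
    have hA : Filter.Tendsto (fun p : G × G => a⁻¹ * p.1) (𝓝 (a, b)) (𝓝 (1 : G)) := by
      have := ((hl a⁻¹).tendsto a).comp (continuous_fst.tendsto (a, b))
      simpa [Function.comp_def] using this
    have hB : Filter.Tendsto (fun p : G × G => p.2 * b⁻¹) (𝓝 (a, b)) (𝓝 (1 : G)) := by
      have := ((hr b⁻¹).tendsto b).comp (continuous_snd.tendsto (a, b))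
      simpa [Function.comp_def] using this
    exact hmul1.comp (hA.prodMk hB)
  exact houter.comp hinner

end Assembly

end CompactSemitopGrp

theorem compact_almostParatopological_topologicalGroup {G : Type*} [Group G]
    [TopologicalSpace G] [CompactSpace G]
    (hl : ∀ g : G, Continuous fun x : G => g * x)
    (hr : ∀ g : G, Continuous fun x : G => x * g)
    (hG : IsAlmostParatopological G) :
    Continuous (fun p : G × G => p.1 * p.2) ∧ Continuous fun x : G => x⁻¹ :=
  ⟨CompactSemitopGrp.continuous_mul' hl hr hG, CompactSemitopGrp.continuous_inv' hl hr hG⟩
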